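/- arXiv:2004.14226 — 3 statements merged into one kernel-verified Lean document; each statement's English description precedes it below -/
import Mathlib

section
/- Let H be a separable complex Hilbert space and let μ be a Borel probability measure on H with ∫ ‖ψ‖² dμ(ψ) = 1 and mean zero (∫ ⟨φ, ψ⟩ dμ(ψ) = 0 for all φ ∈ H). Let Aμ be the measure Aμ(dψ) = ‖ψ‖² μ(dψ) and let P: H∖{0} → S(H), P(ψ) = ψ/‖ψ‖. Then the pushforward ν = P_*(Aμ) is a Borel probability measure on the unit sphere S(H), and its density operator equals the covariance operator of μ: for all φ, χ ∈ H, ∫_{S(H)} ⟨φ, ψ⟩⟨ψ, χ⟩ dν(ψ) = ∫_H ⟨φ, ψ⟩⟨ψ, χ⟩ dμ(ψ). -/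
open MeasureTheory
open scoped InnerProductSpace ComplexInnerProductSpace ENNReal

/-- Let `μ` be a Borel probability measure on a separable complex Hilbert
space with `∫ ‖ψ‖² dμ = 1` and mean zero. Let `Aμ(dψ) = ‖ψ‖² μ(dψ)` and let
`P(ψ) = ψ/‖ψ‖`. Then `ν = P_*(Aμ)` is a Borel probability measure concentrated on the
unit sphere, and its density operator equals the covariance operator of `μ`:
`∫ ⟪φ, ψ⟫⟪ψ, χ⟫ dν(ψ) = ∫ ⟪φ, ψ⟫⟪ψ, χ⟫ dμ(ψ)` for all `φ, χ`. -/
theorem adjustProject_densityOperator_eq_covariance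
    {H : Type*} [NormedAddCommGroup H] [InnerProductSpace ℂ H] [CompleteSpace H]
    [SecondCountableTopology H] [MeasurableSpace H] [BorelSpace H]
    (μ : Measure H) [IsProbabilityMeasure μ]
    (h2 : ∫ ψ, ‖ψ‖ ^ 2 ∂μ = 1)
    (hmean : ∀ φ : H, ∫ ψ, ⟪φ, ψ⟫_ℂ ∂μ = 0) :
    IsProbabilityMeasure
      ((μ.withDensity (fun ψ => (‖ψ‖₊ ^ 2 : ℝ≥0∞))).map (fun ψ => ‖ψ‖⁻¹ • ψ)) ∧
    ((μ.withDensity (fun ψ => (‖ψ‖₊ ^ 2 : ℝ≥0∞))).map (fun ψ => ‖ψ‖⁻¹ • ψ))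
      (Metric.sphere (0 : H) 1) = 1 ∧
    ∀ φ χ : H,
      (∫ ψ, ⟪φ, ψ⟫_ℂ * ⟪ψ, χ⟫_ℂ
          ∂((μ.withDensity (fun ψ => (‖ψ‖₊ ^ 2 : ℝ≥0∞))).map (fun ψ => ‖ψ‖⁻¹ • ψ)))
        = ∫ ψ, ⟪φ, ψ⟫_ℂ * ⟪ψ, χ⟫_ℂ ∂μ := by
  have hP : Measurable (fun ψ : H => ‖ψ‖⁻¹ • ψ) :=
    (measurable_norm.inv).smul measurable_id
  have hint : Integrable (fun ψ : H => ‖ψ‖ ^ 2) μ := by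
    by_contra h
    rw [integral_undef h] at h2
    norm_num at h2
  have key : ∀ ψ : H, (‖ψ‖₊ ^ 2 : ℝ≥0∞) = ENNReal.ofReal (‖ψ‖ ^ 2) := fun ψ => by
    rw [ENNReal.ofReal_pow (norm_nonneg _), ofReal_norm, enorm_eq_nnnorm]
  have hmass : (μ.withDensity (fun ψ => (‖ψ‖₊ ^ 2 : ℝ≥0∞))) Set.univ = 1 := by
    rw [withDensity_apply _ MeasurableSet.univ, setLIntegral_univ]
    have : ∫⁻ ψ, (‖ψ‖₊ ^ 2 : ℝ≥0∞) ∂μ = ENNReal.ofReal (∫ ψ, ‖ψ‖ ^ 2 ∂μ) := by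
      rw [ofReal_integral_eq_lintegral_ofReal hint
        (Filter.Eventually.of_forall fun ψ => by positivity)]
      exact lintegral_congr fun ψ => key ψ
    rw [this, h2, ENNReal.ofReal_one]
  have hzero : (μ.withDensity (fun ψ => (‖ψ‖₊ ^ 2 : ℝ≥0∞))) {(0 : H)} = 0 := by
    rw [withDensity_apply _ (measurableSet_singleton _)]
    rw [lintegral_singleton]
    simp
  constructor
  · constructor
    rw [Measure.map_apply hP MeasurableSet.univ, Set.preimage_univ, hmass]
  constructor
  · rw [Measure.map_apply hP Metric.isClosed_sphere.measurableSet]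
    have hsub : {(0:H)}ᶜ ⊆ (fun ψ : H => ‖ψ‖⁻¹ • ψ) ⁻¹' Metric.sphere (0 : H) 1 := by
      intro ψ hψ
      simp only [Set.mem_compl_iff, Set.mem_singleton_iff] at hψ
      simp only [Set.mem_preimage, Metric.mem_sphere, dist_zero_right, norm_smul,
        norm_inv, norm_norm]
      exact inv_mul_cancel₀ (norm_ne_zero_iff.mpr hψ)
    have hcompl : (μ.withDensity (fun ψ => (‖ψ‖₊ ^ 2 : ℝ≥0∞))) {(0:H)}ᶜ = 1 := by
      have h := measure_add_measure_compl (μ := μ.withDensity (fun ψ => (‖ψ‖₊ ^ 2 : ℝ≥0∞)))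
        (measurableSet_singleton (0:H))
      rw [hzero, hmass, zero_add] at h
      exact h
    refine le_antisymm (by rw [← hmass]; exact measure_mono (Set.subset_univ _)) ?_
    rw [← hcompl]
    exact measure_mono hsub
  · intro φ χ
    have hcont : Continuous (fun ψ : H => ⟪φ, ψ⟫_ℂ * ⟪ψ, χ⟫_ℂ) :=
      (continuous_const.inner continuous_id).mul (continuous_id.inner continuous_const)
    rw [integral_map hP.aemeasurable hcont.aestronglyMeasurable]
    simp_rw [← ENNReal.coe_pow]
    rw [integral_withDensity_eq_integral_smul
      ((measurable_nnnorm.pow_const 2) : Measurable fun ψ : H => ‖ψ‖₊ ^ 2)]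
    refine integral_congr_ae (Filter.Eventually.of_forall fun ψ => ?_)
    by_cases h0 : ψ = 0
    · simp [h0]
    · have hn : (‖ψ‖ : ℝ) ≠ 0 := norm_ne_zero_iff.mpr h0
      have hnc : (‖ψ‖ : ℂ) ≠ 0 := by exact_mod_cast hn
      have hsm : (‖ψ‖⁻¹ : ℝ) • ψ = ((‖ψ‖ : ℂ))⁻¹ • ψ := by
        rw [← Complex.ofReal_inv, Complex.coe_smul]
      simp only [hsm, inner_smul_right, inner_smul_left, NNReal.smul_def, NNReal.coe_pow,
        coe_nnnorm, Complex.real_smul, Complex.ofReal_pow, map_inv₀, Complex.conj_ofReal]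
      field_simp
end

section
/- Let H be a separable complex Hilbert space, and for n ∈ ℕ let ρₙ and ρ be positive trace-class operators on H with tr ρₙ = tr ρ = 1, such that tr |ρₙ − ρ| → 0 as n → ∞. Then for every orthonormal basis {bᵢ : i ∈ ℕ} of H, the tails of the diagonal entries are uniformly small: sup_{n ∈ ℕ} ∑_{i ≥ k} ⟨bᵢ, ρₙ bᵢ⟩ → 0 as k → ∞. -/
open MeasureTheory Filter
open scoped InnerProductSpace ComplexInnerProductSpace Topology

set_option synthInstance.maxHeartbeats 1000000
set_option maxHeartbeats 1000000

section aux

variable {H : Type*} [NormedAddCommGroup H] [InnerProductSpace ℂ H] [CompleteSpace H]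

/-- If `D` is positive and `D * D = A * A` with `A` self-adjoint, then `A ≤ D`. -/
lemma aux_le_abs (A D : H →L[ℂ] H) (hA : IsSelfAdjoint A) (hD : D.IsPositive)
    (hsq : D * D = A * A) : A ≤ D := by
  have hD0 : (0 : H →L[ℂ] H) ≤ D := (ContinuousLinearMap.nonneg_iff_isPositive D).2 hD
  have h1 : CFC.sqrt (A * A) = D := CFC.sqrt_unique hsq hD0
  have e1 := CFC.posPart_mul_negPart A
  have e2 := CFC.negPart_mul_posPart A
  have e3 := CFC.posPart_sub_negPart A hA
  have expand1 : (A⁺ + A⁻) * (A⁺ + A⁻) = A⁺ * A⁺ + A⁻ * A⁻ := by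
    rw [add_mul, mul_add, mul_add, e1, e2]; abel
  have expand2 : (A⁺ - A⁻) * (A⁺ - A⁻) = A⁺ * A⁺ + A⁻ * A⁻ := by
    rw [sub_mul, mul_sub, mul_sub, e1, e2]; abel
  have h2 : CFC.sqrt (A * A) = A⁺ + A⁻ := by
    refine CFC.sqrt_unique ?_ (add_nonneg (CFC.posPart_nonneg A) (CFC.negPart_nonneg A))
    rw [expand1, ← expand2, e3]
  have hDeq : D = A⁺ + A⁻ := h1.symm.trans h2
  have hsub : (0 : H →L[ℂ] H) ≤ D - A := by
    have h4 : D - A = A⁻ + A⁻ := by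
      calc D - A = A⁺ + A⁻ - (A⁺ - A⁻) := by rw [hDeq, e3]
      _ = A⁻ + A⁻ := by abel
    rw [h4]
    exact add_nonneg (CFC.negPart_nonneg A) (CFC.negPart_nonneg A)
  exact sub_nonneg.mp hsub

end aux

/-- Tails of a summable real series tend to zero. -/
lemma aux_tail_tendsto {f : ℕ → ℝ} (hf : Summable f) :
    Tendsto (fun k => ∑' i : {i : ℕ // k ≤ i}, f i.1) atTop (𝓝 0) := by
  have h : ∀ k : ℕ, ∑' i : {i : ℕ // k ≤ i}, f i.1 = ∑' j, f (j + k) := by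
    intro k
    exact (Equiv.tsum_eq (⟨fun j => ⟨j + k, Nat.le_add_left k j⟩, fun i => i.1 - k,
      fun j => by simp, fun i => Subtype.ext (Nat.sub_add_cancel i.2)⟩ :
      ℕ ≃ {i : ℕ // k ≤ i}) (fun i => f i.1)).symm
  simpa only [h] using tendsto_sum_nat_add f

/-- Let `ρₙ, ρ` be positive trace-class operators of trace `1` on a
separable complex Hilbert space with `tr |ρₙ − ρ| → 0` (where `|M|` is the positive square
root of `M*M`). Then for every orthonormal basis `{bᵢ}` the tails of the diagonal entries
are uniformly small: `sup_n ∑_{i ≥ k} ⟪bᵢ, ρₙ bᵢ⟫ → 0` as `k → ∞`. -/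
theorem uniform_tail_bound_of_traceNorm_tendsto
    {H : Type*} [NormedAddCommGroup H] [InnerProductSpace ℂ H] [CompleteSpace H]
    [SecondCountableTopology H]
    (b : HilbertBasis ℕ ℂ H)
    (ρs : ℕ → H →L[ℂ] H) (ρ : H →L[ℂ] H)
    (hpos : ∀ n, (ρs n).IsPositive) (hposρ : ρ.IsPositive)
    (hsum : ∀ n, Summable fun i => (⟪b i, (ρs n) (b i)⟫_ℂ).re)
    (hsumρ : Summable fun i => (⟪b i, ρ (b i)⟫_ℂ).re)
    (htr : ∀ n, ∑' i, (⟪b i, (ρs n) (b i)⟫_ℂ).re = 1)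
    (htrρ : ∑' i, (⟪b i, ρ (b i)⟫_ℂ).re = 1)
    -- `Δ n` is the absolute value `|ρₙ − ρ|`: the positive operator whose square is
    -- `(ρₙ − ρ)* (ρₙ − ρ)`
    (Δ : ℕ → H →L[ℂ] H) (hΔpos : ∀ n, (Δ n).IsPositive)
    (hΔsq : ∀ n, Δ n ∘L Δ n =
      (ContinuousLinearMap.adjoint (ρs n - ρ)) ∘L (ρs n - ρ))
    (hΔsum : ∀ n, Summable fun i => (⟪b i, (Δ n) (b i)⟫_ℂ).re)
    -- trace-norm convergence `‖ρₙ − ρ‖₁ = tr |ρₙ − ρ| → 0`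
    (htendsto : Tendsto (fun n => ∑' i, (⟪b i, (Δ n) (b i)⟫_ℂ).re) atTop (𝓝 0)) :
    Tendsto (fun k => ⨆ n, ∑' i : {i : ℕ // k ≤ i}, (⟪b i.1, (ρs n) (b i.1)⟫_ℂ).re)
      atTop (𝓝 0) := by
  classical
  -- pointwise diagonal inequality via `ρₙ - ρ ≤ |ρₙ - ρ|`
  have key : ∀ n (x : H), (⟪x, (ρs n) x⟫_ℂ).re ≤ (⟪x, ρ x⟫_ℂ).re + (⟪x, (Δ n) x⟫_ℂ).re := by
    intro n x
    have hA : IsSelfAdjoint (ρs n - ρ) := (hpos n).isSelfAdjoint.sub hposρ.isSelfAdjoint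
    have hsq : Δ n * Δ n = (ρs n - ρ) * (ρs n - ρ) := by
      have h := hΔsq n
      rw [← ContinuousLinearMap.star_eq_adjoint, hA.star_eq] at h
      simpa only [ContinuousLinearMap.mul_def] using h
    have hle := aux_le_abs (ρs n - ρ) (Δ n) hA (hΔpos n) hsq
    have hP : (Δ n - (ρs n - ρ)).IsPositive :=
      (ContinuousLinearMap.nonneg_iff_isPositive _).1 (sub_nonneg.2 hle)
    have h0 := hP.inner_nonneg_right x
    simp only [ContinuousLinearMap.sub_apply, inner_sub_right, map_sub] at h0
    have h0' : (0 : ℝ) ≤ (⟪x, (Δ n) x⟫_ℂ).re - ((⟪x, (ρs n) x⟫_ℂ).re - (⟪x, ρ x⟫_ℂ).re) := by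
      simpa using (Complex.nonneg_iff.1 h0).1
    linarith
  have hfnn : ∀ n i, (0:ℝ) ≤ (⟪b i, (ρs n) (b i)⟫_ℂ).re := fun n i =>
    (Complex.nonneg_iff.1 ((hpos n).inner_nonneg_right _)).1
  have hdnn : ∀ n i, (0:ℝ) ≤ (⟪b i, (Δ n) (b i)⟫_ℂ).re := fun n i =>
    (Complex.nonneg_iff.1 ((hΔpos n).inner_nonneg_right _)).1
  set T : ℕ → ℕ → ℝ :=
    fun n k => ∑' i : {i : ℕ // k ≤ i}, (⟪b i.1, (ρs n) (b i.1)⟫_ℂ).re with hT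
  set Tρ : ℕ → ℝ := fun k => ∑' i : {i : ℕ // k ≤ i}, (⟪b i.1, ρ (b i.1)⟫_ℂ).re with hTρ
  have hTsum : ∀ n k, Summable (fun i : {i : ℕ // k ≤ i} => (⟪b i.1, (ρs n) (b i.1)⟫_ℂ).re) :=
    fun n k => (hsum n).subtype _
  have hTρsum : ∀ k, Summable (fun i : {i : ℕ // k ≤ i} => (⟪b i.1, ρ (b i.1)⟫_ℂ).re) :=
    fun k => hsumρ.subtype _
  have hDsum : ∀ n k, Summable (fun i : {i : ℕ // k ≤ i} => (⟪b i.1, (Δ n) (b i.1)⟫_ℂ).re) :=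
    fun n k => (hΔsum n).subtype _
  -- tail bound
  have hTbound : ∀ n k, T n k ≤ Tρ k + ∑' i, (⟪b i, (Δ n) (b i)⟫_ℂ).re := by
    intro n k
    have step1 : T n k ≤ ∑' i : {i : ℕ // k ≤ i},
        ((⟪b i.1, ρ (b i.1)⟫_ℂ).re + (⟪b i.1, (Δ n) (b i.1)⟫_ℂ).re) :=
      Summable.tsum_le_tsum (fun i => key n (b i.1)) (hTsum n k) ((hTρsum k).add (hDsum n k))
    have step2 : ∑' i : {i : ℕ // k ≤ i},
        ((⟪b i.1, ρ (b i.1)⟫_ℂ).re + (⟪b i.1, (Δ n) (b i.1)⟫_ℂ).re)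
        = Tρ k + ∑' i : {i : ℕ // k ≤ i}, (⟪b i.1, (Δ n) (b i.1)⟫_ℂ).re :=
      Summable.tsum_add (hTρsum k) (hDsum n k)
    have step3 : ∑' i : {i : ℕ // k ≤ i}, (⟪b i.1, (Δ n) (b i.1)⟫_ℂ).re
        ≤ ∑' i, (⟪b i, (Δ n) (b i)⟫_ℂ).re :=
      Summable.tsum_le_tsum_of_inj Subtype.val Subtype.val_injective (fun c _ => hdnn n c)
        (fun i => le_rfl) (hDsum n k) (hΔsum n)
    calc T n k ≤ _ := step1
      _ = _ := step2
      _ ≤ Tρ k + ∑' i, (⟪b i, (Δ n) (b i)⟫_ℂ).re := by linarith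
  have hTnn : ∀ n k, (0:ℝ) ≤ T n k := fun n k => tsum_nonneg fun i => hfnn n i.1
  have hSnn : ∀ k, (0:ℝ) ≤ ⨆ n, T n k := fun k => Real.iSup_nonneg fun n => hTnn n k
  rw [Metric.tendsto_atTop]
  intro ε hε
  have hε4 : (0:ℝ) < ε / 4 := by linarith
  obtain ⟨N, hN⟩ := eventually_atTop.1 (htendsto.eventually_lt_const hε4)
  have hA2 := (aux_tail_tendsto hsumρ).eventually_lt_const hε4
  have hA3 : ∀ᶠ k in atTop, ∀ n ∈ Finset.range N, T n k < ε / 2 :=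
    (Finset.range N).eventually_all.2 fun n _ =>
      (aux_tail_tendsto (hsum n)).eventually_lt_const (by linarith)
  obtain ⟨K, hK⟩ := eventually_atTop.1 (hA2.and hA3)
  refine ⟨K, fun k hk => ?_⟩
  obtain ⟨h2, h3⟩ := hK k hk
  rw [Real.dist_eq, sub_zero, abs_of_nonneg (hSnn k)]
  have hsup : (⨆ n, T n k) ≤ ε / 2 := by
    refine ciSup_le fun n => ?_
    by_cases hn : n < N
    · exact (h3 n (Finset.mem_range.2 hn)).le
    · calc T n k ≤ Tρ k + ∑' i, (⟪b i, (Δ n) (b i)⟫_ℂ).re := hTbound n k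
        _ ≤ ε / 4 + ε / 4 := add_le_add h2.le (hN n (le_of_not_gt hn)).le
        _ = ε / 2 := by ring
  linarith
end

section
/- Let H be a separable complex Hilbert space. For n ∈ ℕ let μₙ be Borel probability measures on H with ∫ ‖ψ‖² dμₙ(ψ) = 1, and let μ be a Borel probability measure on H with ∫ ‖ψ‖² dμ(ψ) = 1. If μₙ converges weakly to μ, then the adjusted measures converge weakly: Aμₙ ⇒ Aμ, where Aν(dψ) = ‖ψ‖² ν(dψ). Equivalently, for every bounded continuous f : H → ℝ, ∫ f(ψ) ‖ψ‖² dμₙ(ψ) → ∫ f(ψ) ‖ψ‖² dμ(ψ). -/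
open MeasureTheory Filter
open scoped Topology BoundedContinuousFunction

noncomputable def trunc {H : Type*} [NormedAddCommGroup H] (k : ℕ) : H →ᵇ ℝ :=
  BoundedContinuousFunction.ofNormedAddCommGroup (fun ψ => min (‖ψ‖ ^ 2) k)
    (by continuity) k (by
      intro ψ
      rw [Real.norm_eq_abs, abs_le]
      have h0 : (0:ℝ) ≤ min (‖ψ‖ ^ 2) k := le_min (sq_nonneg _) (Nat.cast_nonneg k)
      have hk : (0:ℝ) ≤ (k:ℝ) := Nat.cast_nonneg k
      exact ⟨by linarith, min_le_right _ _⟩)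

lemma trunc_apply {H : Type*} [NormedAddCommGroup H] (k : ℕ) (ψ : H) :
    trunc k ψ = min (‖ψ‖ ^ 2) k := rfl

lemma trunc_nonneg {H : Type*} [NormedAddCommGroup H] (k : ℕ) (ψ : H) :
    0 ≤ trunc k ψ := le_min (sq_nonneg _) (Nat.cast_nonneg k)

lemma trunc_le {H : Type*} [NormedAddCommGroup H] (k : ℕ) (ψ : H) :
    trunc k ψ ≤ ‖ψ‖ ^ 2 := min_le_left _ _

lemma trunc_bound {H : Type*} [NormedAddCommGroup H]
    [MeasurableSpace H] [OpensMeasurableSpace H]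
    (ν : Measure H) [IsProbabilityMeasure ν]
    (hν : Integrable (fun ψ => ‖ψ‖ ^ 2) ν) (f : H →ᵇ ℝ) (k : ℕ) :
    |(∫ ψ, f ψ * ‖ψ‖ ^ 2 ∂ν) - ∫ ψ, f ψ * trunc k ψ ∂ν| ≤
      ‖f‖ * ((∫ ψ, ‖ψ‖ ^ 2 ∂ν) - ∫ ψ, trunc k ψ ∂ν) := by
  have hInt1 : Integrable (fun ψ => f ψ * ‖ψ‖ ^ 2) ν :=
    hν.bdd_mul f.continuous.aestronglyMeasurable (c := ‖f‖) (Eventually.of_forall fun x => f.norm_coe_le_norm x)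
  have hInt2 : Integrable (fun ψ => f ψ * trunc k ψ) ν := by
    have := (f * trunc k).integrable ν
    exact this
  have hIntT : Integrable (fun ψ => trunc k ψ) ν := (trunc k).integrable ν
  rw [← integral_sub hInt1 hInt2, ← integral_sub hν hIntT]
  have hsub : Integrable (fun ψ => f ψ * ‖ψ‖ ^ 2 - f ψ * trunc k ψ) ν := hInt1.sub hInt2
  calc |∫ ψ, (f ψ * ‖ψ‖ ^ 2 - f ψ * trunc k ψ) ∂ν|
      ≤ ∫ ψ, |f ψ * ‖ψ‖ ^ 2 - f ψ * trunc k ψ| ∂ν := by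
        simpa [Real.norm_eq_abs] using norm_integral_le_integral_norm
          (fun ψ => f ψ * ‖ψ‖ ^ 2 - f ψ * trunc k ψ) (μ := ν)
    _ ≤ ∫ ψ, ‖f‖ * (‖ψ‖ ^ 2 - trunc k ψ) ∂ν := by
        apply integral_mono hsub.abs ((hν.sub hIntT).const_mul ‖f‖)
        intro ψ
        simp only [Pi.sub_apply]
        have h1 : trunc k ψ ≤ ‖ψ‖ ^ 2 := trunc_le k ψ
        have h2 : |f ψ| ≤ ‖f‖ := by
          simpa [Real.norm_eq_abs] using f.norm_coe_le_norm ψ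
        have heq : f ψ * ‖ψ‖ ^ 2 - f ψ * trunc k ψ = f ψ * (‖ψ‖ ^ 2 - trunc k ψ) := by ring
        rw [heq, abs_mul, abs_of_nonneg (by linarith : (0:ℝ) ≤ ‖ψ‖ ^ 2 - trunc k ψ)]
        exact mul_le_mul_of_nonneg_right h2 (by linarith)
    _ = ‖f‖ * ∫ ψ, (‖ψ‖ ^ 2 - trunc k ψ) ∂ν := integral_const_mul _ _

/-- Let `μₙ, μ` be Borel probability measures on a separable complex
Hilbert space, all with `∫ ‖ψ‖² = 1`. If `μₙ ⇒ μ` weakly, then the adjusted measures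
`Aν(dψ) = ‖ψ‖² ν(dψ)` converge weakly, `Aμₙ ⇒ Aμ`: for every bounded continuous
`f : H → ℝ`, `∫ f(ψ) ‖ψ‖² dμₙ(ψ) → ∫ f(ψ) ‖ψ‖² dμ(ψ)`. -/
theorem adjusted_weak_convergence
    {H : Type*} [NormedAddCommGroup H] [InnerProductSpace ℂ H] [CompleteSpace H]
    [SecondCountableTopology H] [MeasurableSpace H] [BorelSpace H]
    (μs : ℕ → Measure H) (hprob : ∀ n, IsProbabilityMeasure (μs n))
    (μ : Measure H) (hprobμ : IsProbabilityMeasure μ)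
    (h2 : ∀ n, ∫ ψ, ‖ψ‖ ^ 2 ∂(μs n) = 1) (h2μ : ∫ ψ, ‖ψ‖ ^ 2 ∂μ = 1)
    (hweak : ∀ f : H →ᵇ ℝ,
      Tendsto (fun n => ∫ ψ, f ψ ∂(μs n)) atTop (𝓝 (∫ ψ, f ψ ∂μ))) :
    ∀ f : H →ᵇ ℝ,
      Tendsto (fun n => ∫ ψ, f ψ * ‖ψ‖ ^ 2 ∂(μs n)) atTop
        (𝓝 (∫ ψ, f ψ * ‖ψ‖ ^ 2 ∂μ)) := by
  intro f
  have hIntμ : Integrable (fun ψ => ‖ψ‖ ^ 2) μ := by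
    by_contra h; rw [integral_undef h] at h2μ; norm_num at h2μ
  have hIntn : ∀ n, Integrable (fun ψ => ‖ψ‖ ^ 2) (μs n) := by
    intro n; by_contra h
    have := h2 n
    rw [integral_undef h] at this; norm_num at this
  rw [Metric.tendsto_atTop]
  intro ε hε
  set C : ℝ := ‖f‖ + 1 with hCdef
  have hCpos : 0 < C := by positivity
  have hC1 : 1 ≤ C := by
    have := norm_nonneg f; simp only [hCdef]; linarith
  have hfC : ‖f‖ ≤ C := by simp [hCdef]
  set δ : ℝ := ε / (8 * C) with hδdef
  have hδpos : 0 < δ := by positivity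
  have hCδ : C * δ = ε / 8 := by
    field_simp [hδdef]
    rw [hδdef]; field_simp
  have hδle : δ ≤ ε / 8 := by
    nlinarith [mul_nonneg (sub_nonneg.2 hC1) hδpos.le]
  clear_value C δ
  -- truncation integrals tend to 1 under μ
  have hdom : Tendsto (fun k : ℕ => ∫ ψ, trunc k ψ ∂μ) atTop (𝓝 1) := by
    rw [← h2μ]
    apply tendsto_integral_of_dominated_convergence (fun ψ => ‖ψ‖ ^ 2)
      (fun k => ((trunc k).continuous.aestronglyMeasurable)) hIntμ
    · intro k
      filter_upwards with ψ
      rw [Real.norm_eq_abs, abs_of_nonneg (trunc_nonneg k ψ)]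
      exact trunc_le k ψ
    · filter_upwards with ψ
      apply tendsto_atTop_of_eventually_const (i₀ := ⌈‖ψ‖ ^ 2⌉₊)
      intro k hk
      exact min_eq_left ((Nat.le_ceil _).trans (Nat.cast_le.2 hk))
  obtain ⟨k, hk⟩ : ∃ k : ℕ, 1 - δ < ∫ ψ, trunc k ψ ∂μ :=
    ((tendsto_order.1 hdom).1 (1 - δ) (by linarith)).exists
  -- from weak convergence
  have hw1 := hweak (trunc k)
  have hw2 := hweak (f * trunc k)
  rw [Metric.tendsto_atTop] at hw1 hw2
  obtain ⟨N1, hN1⟩ := hw1 δ hδpos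
  obtain ⟨N2, hN2⟩ := hw2 δ hδpos
  refine ⟨max N1 N2, fun n hn => ?_⟩
  have hn1 := hN1 n (le_of_max_le_left hn)
  have hn2 := hN2 n (le_of_max_le_right hn)
  rw [Real.dist_eq] at hn1 hn2 ⊢
  simp only [BoundedContinuousFunction.coe_mul, Pi.mul_apply] at hn2
  -- bounds
  have hbμ := trunc_bound μ hIntμ f k
  have hbn := trunc_bound (μs n) (hIntn n) f k
  rw [h2μ] at hbμ
  rw [h2 n] at hbn
  -- ∫ trunc dμₙ within δ of ∫ trunc dμ, so > 1 - 2δ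
  have htn : 1 - 2 * δ < ∫ ψ, trunc k ψ ∂(μs n) := by
    have := abs_sub_lt_iff.1 hn1
    linarith [this.1, this.2]
  -- trunc integrals ≤ 1
  have htle : ∀ (ν : Measure H), IsProbabilityMeasure ν →
      Integrable (fun ψ => ‖ψ‖ ^ 2) ν → (∫ ψ, ‖ψ‖ ^ 2 ∂ν = 1) →
      (∫ ψ, trunc k ψ ∂ν) ≤ 1 := by
    intro ν _ hi hone
    rw [← hone]
    exact integral_mono ((trunc k).integrable ν) hi (fun ψ => trunc_le k ψ)
  have htleμ := htle μ hprobμ hIntμ h2μ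
  have htlen := htle (μs n) (hprob n) (hIntn n) (h2 n)
  have e1 : |(∫ ψ, f ψ * ‖ψ‖ ^ 2 ∂(μs n)) - ∫ ψ, f ψ * trunc k ψ ∂(μs n)| ≤ C * (2 * δ) := by
    refine hbn.trans ?_
    have h1 : (1 : ℝ) - ∫ ψ, trunc k ψ ∂(μs n) ≤ 2 * δ := by linarith
    have h2' : (0:ℝ) ≤ 1 - ∫ ψ, trunc k ψ ∂(μs n) := by linarith
    calc ‖f‖ * (1 - ∫ ψ, trunc k ψ ∂(μs n)) ≤ C * (1 - ∫ ψ, trunc k ψ ∂(μs n)) :=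
          mul_le_mul_of_nonneg_right hfC h2'
      _ ≤ C * (2 * δ) := mul_le_mul_of_nonneg_left h1 hCpos.le
  have e2 : |(∫ ψ, f ψ * ‖ψ‖ ^ 2 ∂μ) - ∫ ψ, f ψ * trunc k ψ ∂μ| ≤ C * δ := by
    refine hbμ.trans ?_
    have h1 : (1 : ℝ) - ∫ ψ, trunc k ψ ∂μ ≤ δ := by linarith
    have h2' : (0:ℝ) ≤ 1 - ∫ ψ, trunc k ψ ∂μ := by linarith
    calc ‖f‖ * (1 - ∫ ψ, trunc k ψ ∂μ) ≤ C * (1 - ∫ ψ, trunc k ψ ∂μ) :=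
          mul_le_mul_of_nonneg_right hfC h2'
      _ ≤ C * δ := mul_le_mul_of_nonneg_left h1 hCpos.le
  have tri1 := abs_sub_le (∫ ψ, f ψ * ‖ψ‖ ^ 2 ∂(μs n)) (∫ ψ, f ψ * trunc k ψ ∂(μs n))
    (∫ ψ, f ψ * ‖ψ‖ ^ 2 ∂μ)
  have tri2 := abs_sub_le (∫ ψ, f ψ * trunc k ψ ∂(μs n)) (∫ ψ, f ψ * trunc k ψ ∂μ)
    (∫ ψ, f ψ * ‖ψ‖ ^ 2 ∂μ)
  rw [abs_sub_comm] at e2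
  have hring : C * (2 * δ) = 2 * (C * δ) := by ring
  linarith
end
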